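/- Let Z(z) = (2πi/6)∫_{i∞}^z η⁴ dz and let χ be the character of SL(2,ℤ) with χ([[1,1],[0,1]]) = e^{2πi/6}. Then for every γ ∈ SL(2,ℤ) one has dZ|₀γ = χ(γ) dZ, and consequently Z|₀γ = χ(γ)Z + L(γ) for a map L: SL(2,ℤ) → ℂ satisfying the crossed-homomorphism identity L(γ₁γ₂) = χ(γ₂)L(γ₁) + L(γ₂); L restricts to a group homomorphism on the commutator subgroup Γ'(1) = ker χ. -/

import Mathlib

open Complex

/-- `GL⁺(2,ℚ)`. -/
abbrev GQ := Matrix.GLPos (Fin 2) ℚ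

/-- The underlying rational matrix of an element of `GL⁺(2,ℚ)`. -/
def matOf (g : GQ) : Matrix (Fin 2) (Fin 2) ℚ :=
  ((g : Matrix.GeneralLinearGroup (Fin 2) ℚ) : Matrix (Fin 2) (Fin 2) ℚ)

/-- The Möbius action `γ·z = (az+b)/(cz+d)` of `GL⁺(2,ℚ)` on the upper half-plane. -/
noncomputable def moeb (g : GQ) (z : ℂ) : ℂ :=
  ((matOf g 0 0 : ℚ) * z + (matOf g 0 1 : ℚ)) /
    ((matOf g 1 0 : ℚ) * z + (matOf g 1 1 : ℚ))

/-- The automorphy factor `j(γ,z) = cz+d`. -/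
noncomputable def jfac (g : GQ) (z : ℂ) : ℂ :=
  (matOf g 1 0 : ℚ) * z + (matOf g 1 1 : ℚ)

/-- The weight-`k` slash action `(f|ₖγ)(z) = det(γ)^{k/2} f(γ·z) (cz+d)^{-k}`. -/
noncomputable def slashf (k : ℤ) (g : GQ) (f : ℂ → ℂ) : ℂ → ℂ :=
  fun z => (((matOf g).det : ℂ)) ^ ((k : ℂ) / 2) * f (moeb g z) * jfac g z ^ (-k)

/-- The Dedekind eta function. -/
noncomputable def dedekindEta (z : ℂ) : ℂ :=
  Complex.exp ((Real.pi : ℂ) * Complex.I * z / 12) *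
    ∏' n : ℕ, (1 - Complex.exp (2 * (Real.pi : ℂ) * Complex.I * ((n : ℂ) + 1) * z))

/-- The cocycle `μ_γ = (1/2πi) d/dz log(η⁴∘γ / η⁴)`. -/
noncomputable def muC (g : GQ) : ℂ → ℂ :=
  fun z => (1 / (2 * (Real.pi : ℂ) * Complex.I)) *
    logDeriv (fun w => dedekindEta (moeb g w) ^ 4 / dedekindEta w ^ 4) z

/-- `g₂* = (1/2πi) d/dz log η⁴`. -/
noncomputable def g2star : ℂ → ℂ :=
  fun z => (1 / (2 * (Real.pi : ℂ) * Complex.I)) * logDeriv (fun w => dedekindEta w ^ 4) z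

/-- The Ramanujan operator `X = (1/2πi) d/dz - g₂*·Y` on forms of weight `k`
(where `Y` acts as `k/2`). -/
noncomputable def Xw (k : ℤ) (f : ℂ → ℂ) : ℂ → ℂ :=
  fun z => (1 / (2 * (Real.pi : ℂ) * Complex.I)) * deriv f z
    - ((k : ℂ) / 2) * g2star z * f z

/-- `ω₄ = X(g₂*) + (1/2)(g₂*)²`. -/
noncomputable def omega4 : ℂ → ℂ :=
  fun z => Xw 2 g2star z + (1 / 2) * g2star z ^ 2

/-- The Möbius action of `SL(2,ℤ)`. -/
noncomputable def moebZ (γ : Matrix.SpecialLinearGroup (Fin 2) ℤ) (z : ℂ) : ℂ :=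
  (((γ : Matrix (Fin 2) (Fin 2) ℤ) 0 0 : ℂ) * z
      + ((γ : Matrix (Fin 2) (Fin 2) ℤ) 0 1 : ℂ)) /
    (((γ : Matrix (Fin 2) (Fin 2) ℤ) 1 0 : ℂ) * z
      + ((γ : Matrix (Fin 2) (Fin 2) ℤ) 1 1 : ℂ))

/-- The automorphy factor for `SL(2,ℤ)`. -/
noncomputable def jZ (γ : Matrix.SpecialLinearGroup (Fin 2) ℤ) (z : ℂ) : ℂ :=
  ((γ : Matrix (Fin 2) (Fin 2) ℤ) 1 0 : ℂ) * z
    + ((γ : Matrix (Fin 2) (Fin 2) ℤ) 1 1 : ℂ)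

set_option linter.unusedVariables false in
lemma detC (γ : Matrix.SpecialLinearGroup (Fin 2) ℤ) :
    ((γ : Matrix (Fin 2) (Fin 2) ℤ) 0 0 : ℂ) * ((γ : Matrix (Fin 2) (Fin 2) ℤ) 1 1 : ℂ)
      - ((γ : Matrix (Fin 2) (Fin 2) ℤ) 0 1 : ℂ) * ((γ : Matrix (Fin 2) (Fin 2) ℤ) 1 0 : ℂ) = 1 := by
  have h := γ.2
  rw [Matrix.det_fin_two] at h
  exact_mod_cast congrArg (Int.cast : ℤ → ℂ) h

lemma jZ_ne_zero (γ : Matrix.SpecialLinearGroup (Fin 2) ℤ) {z : ℂ} (hz : 0 < z.im) :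
    jZ γ z ≠ 0 := by
  intro h
  have him := congrArg Complex.im h
  have hre := congrArg Complex.re h
  simp [jZ, Complex.add_im, Complex.mul_im, Complex.add_re, Complex.mul_re] at him hre
  have hc : ((γ : Matrix (Fin 2) (Fin 2) ℤ) 1 0 : ℝ) = 0 := by
    rcases him with h | h
    · exact_mod_cast h
    · exact absurd h hz.ne'
  have hd : ((γ : Matrix (Fin 2) (Fin 2) ℤ) 1 1 : ℝ) = 0 := by
    rw [hc] at hre; simpa using hre
  have hdet := detC γ
  have hc' : ((γ : Matrix (Fin 2) (Fin 2) ℤ) 1 0 : ℂ) = 0 := by exact_mod_cast hc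
  have hd' : ((γ : Matrix (Fin 2) (Fin 2) ℤ) 1 1 : ℂ) = 0 := by exact_mod_cast hd
  rw [hc', hd'] at hdet; simp at hdet

lemma detR (γ : Matrix.SpecialLinearGroup (Fin 2) ℤ) :
    ((γ : Matrix (Fin 2) (Fin 2) ℤ) 0 0 : ℝ) * ((γ : Matrix (Fin 2) (Fin 2) ℤ) 1 1 : ℝ)
      - ((γ : Matrix (Fin 2) (Fin 2) ℤ) 0 1 : ℝ) * ((γ : Matrix (Fin 2) (Fin 2) ℤ) 1 0 : ℝ) = 1 := by
  have h := γ.2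
  rw [Matrix.det_fin_two] at h
  exact_mod_cast congrArg (Int.cast : ℤ → ℝ) h

lemma im_moebZ (γ : Matrix.SpecialLinearGroup (Fin 2) ℤ) {z : ℂ} (hz : 0 < z.im) :
    (moebZ γ z).im = z.im / Complex.normSq (jZ γ z) := by
  have hdet := detR γ
  rw [moebZ, Complex.div_im, div_sub_div_same, jZ]
  congr 1
  simp only [Complex.add_im, Complex.add_re, Complex.mul_im, Complex.mul_re,
    Complex.intCast_im, Complex.intCast_re, mul_zero, zero_mul, sub_zero, add_zero, zero_add]
  linear_combination z.im * hdet

lemma im_moebZ_pos (γ : Matrix.SpecialLinearGroup (Fin 2) ℤ) {z : ℂ} (hz : 0 < z.im) :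
    0 < (moebZ γ z).im := by
  rw [im_moebZ γ hz]
  have hj := jZ_ne_zero γ hz
  have : 0 < Complex.normSq (jZ γ z) := Complex.normSq_pos.mpr hj
  exact div_pos hz this

lemma hasDerivAt_moebZ (γ : Matrix.SpecialLinearGroup (Fin 2) ℤ) {z : ℂ} (hz : 0 < z.im) :
    HasDerivAt (moebZ γ) (1 / jZ γ z ^ 2) z := by
  have hj := jZ_ne_zero γ hz
  set a := ((γ : Matrix (Fin 2) (Fin 2) ℤ) 0 0 : ℂ)
  set b := ((γ : Matrix (Fin 2) (Fin 2) ℤ) 0 1 : ℂ)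
  set c := ((γ : Matrix (Fin 2) (Fin 2) ℤ) 1 0 : ℂ)
  set d := ((γ : Matrix (Fin 2) (Fin 2) ℤ) 1 1 : ℂ)
  have hnum : HasDerivAt (fun w : ℂ => a * w + b) a z := by
    simpa using ((hasDerivAt_id z).const_mul a).add_const b
  have hden : HasDerivAt (fun w : ℂ => c * w + d) c z := by
    simpa using ((hasDerivAt_id z).const_mul c).add_const d
  have h := hnum.div hden (by simpa [jZ] using hj)
  have heq : (a * (c * z + d) - (a * z + b) * c) / (c * z + d) ^ 2 = 1 / jZ γ z ^ 2 := by
    have hdet := detC γ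
    rw [jZ]
    congr 1
    linear_combination hdet
  rw [heq] at h
  exact h

lemma jZ_cocycle (γ₁ γ₂ : Matrix.SpecialLinearGroup (Fin 2) ℤ) {z : ℂ} (hz : 0 < z.im) :
    jZ γ₁ (moebZ γ₂ z) * jZ γ₂ z = jZ (γ₁ * γ₂) z := by
  have hj₂ := jZ_ne_zero γ₂ hz
  simp only [jZ, moebZ, Matrix.SpecialLinearGroup.coe_mul, Matrix.mul_apply, Fin.sum_univ_two]
  push_cast
  rw [jZ] at hj₂
  rw [← mul_div_assoc, div_add' _ _ _ hj₂, div_mul_cancel₀ _ hj₂]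
  ring

lemma moebZ_mul (γ₁ γ₂ : Matrix.SpecialLinearGroup (Fin 2) ℤ) {z : ℂ} (hz : 0 < z.im) :
    moebZ (γ₁ * γ₂) z = moebZ γ₁ (moebZ γ₂ z) := by
  have hj₂ := jZ_ne_zero γ₂ hz
  have hj₁₂ := jZ_ne_zero (γ₁ * γ₂) hz
  have hj₁ : jZ γ₁ (moebZ γ₂ z) ≠ 0 := by
    intro h
    rw [← jZ_cocycle γ₁ γ₂ hz] at hj₁₂
    exact hj₁₂ (by rw [h, zero_mul])
  simp only [jZ, moebZ, Matrix.SpecialLinearGroup.coe_mul, Matrix.mul_apply, Fin.sum_univ_two] at hj₁ hj₂ hj₁₂ ⊢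
  push_cast at hj₁ hj₂ hj₁₂ ⊢
  rw [div_eq_div_iff hj₁₂ hj₁]
  field_simp
  ring


/-- Let `Z` be the primitive of `(2πi/6)η⁴dz` and `χ` the character of `SL(2,ℤ)`
with `χ(T) = e^{2πi/6}` (so that `η⁴|₂γ = χ(γ)η⁴`).  Then `dZ|₀γ = χ(γ)dZ` for
every `γ ∈ SL(2,ℤ)`; consequently `Z|₀γ = χ(γ)Z + L(γ)` for a map
`L : SL(2,ℤ) → ℂ` satisfying the crossed-homomorphism identity, which restricts
to a group homomorphism on `ker χ` (the commutator subgroup `Γ'(1)`). -/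
theorem eichler_primitive_transformation
    (Z : ℂ → ℂ)
    (hZ : ∀ z : ℂ, 0 < z.im →
        HasDerivAt Z ((2 * (Real.pi : ℂ) * Complex.I / 6) * dedekindEta z ^ 4) z)
    (χ : Matrix.SpecialLinearGroup (Fin 2) ℤ →* ℂ)
    (hχT : χ ⟨!![1, 1; 0, 1], by norm_num [Matrix.det_fin_two_of]⟩
        = Complex.exp (2 * (Real.pi : ℂ) * Complex.I / 6))
    (hη : ∀ γ : Matrix.SpecialLinearGroup (Fin 2) ℤ, ∀ z : ℂ, 0 < z.im →
        dedekindEta (moebZ γ z) ^ 4 = χ γ * jZ γ z ^ 2 * dedekindEta z ^ 4) :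
    (∀ γ : Matrix.SpecialLinearGroup (Fin 2) ℤ, ∀ z : ℂ, 0 < z.im →
        deriv (fun w => Z (moebZ γ w)) z = χ γ * deriv Z z) ∧
    ∃ L : Matrix.SpecialLinearGroup (Fin 2) ℤ → ℂ,
      (∀ γ : Matrix.SpecialLinearGroup (Fin 2) ℤ, ∀ z : ℂ, 0 < z.im →
          Z (moebZ γ z) = χ γ * Z z + L γ) ∧
      (∀ γ₁ γ₂ : Matrix.SpecialLinearGroup (Fin 2) ℤ,
          L (γ₁ * γ₂) = χ γ₁ * L γ₂ + L γ₁) ∧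
      (∀ γ₁ γ₂ : Matrix.SpecialLinearGroup (Fin 2) ℤ,
          χ γ₁ = 1 → χ γ₂ = 1 → L (γ₁ * γ₂) = L γ₁ + L γ₂) := by
  have main : ∀ γ : Matrix.SpecialLinearGroup (Fin 2) ℤ, ∀ z : ℂ, 0 < z.im →
      HasDerivAt (fun w => Z (moebZ γ w))
        (χ γ * ((2 * (Real.pi : ℂ) * Complex.I / 6) * dedekindEta z ^ 4)) z := by
    intro γ z hz
    have h1 := hZ (moebZ γ z) (im_moebZ_pos γ hz)
    have h2 := hasDerivAt_moebZ γ hz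
    have h := h1.comp z h2
    refine h.congr_deriv ?_
    rw [hη γ z hz]
    have hj := jZ_ne_zero γ hz
    field_simp
  constructor
  · intro γ z hz
    rw [(main γ z hz).deriv, (hZ z hz).deriv]
  · have hI : (0:ℝ) < Complex.I.im := by simp
    set S : Set ℂ := {z : ℂ | 0 < z.im} with hS
    have hSopen : IsOpen S := isOpen_lt continuous_const Complex.continuous_im
    have hSconv : Convex ℝ S := convex_halfSpace_im_gt 0
    have hiS : Complex.I ∈ S := hI
    have key : ∀ γ : Matrix.SpecialLinearGroup (Fin 2) ℤ, ∀ z : ℂ, 0 < z.im →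
        Z (moebZ γ z) = χ γ * Z z + (Z (moebZ γ Complex.I) - χ γ * Z Complex.I) := by
      intro γ z hz
      have hderiv : ∀ w ∈ S, HasDerivAt (fun u => Z (moebZ γ u) - χ γ * Z u) 0 w := by
        intro w hw
        have h := (main γ w hw).sub ((hZ w hw).const_mul (χ γ))
        exact h.congr_deriv (sub_self _)
      have hdiff : DifferentiableOn ℂ (fun u => Z (moebZ γ u) - χ γ * Z u) S :=
        fun w hw => ((hderiv w hw).differentiableAt).differentiableWithinAt
      have hfd : ∀ w ∈ S, fderivWithin ℂ (fun u => Z (moebZ γ u) - χ γ * Z u) S w = 0 := by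
        intro w hw
        have hf := (hderiv w hw).hasFDerivAt.hasFDerivWithinAt (s := S)
        rw [hf.fderivWithin (hSopen.uniqueDiffWithinAt hw)]
        ext
        simp
      have := hSconv.is_const_of_fderivWithin_eq_zero hdiff hfd hz hiS
      linear_combination this
    set L : Matrix.SpecialLinearGroup (Fin 2) ℤ → ℂ :=
      fun γ => Z (moebZ γ Complex.I) - χ γ * Z Complex.I with hL
    have hcross : ∀ γ₁ γ₂ : Matrix.SpecialLinearGroup (Fin 2) ℤ,
        L (γ₁ * γ₂) = χ γ₁ * L γ₂ + L γ₁ := by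
      intro γ₁ γ₂
      have hw := im_moebZ_pos γ₂ hI
      simp only [hL]
      rw [moebZ_mul γ₁ γ₂ hI, key γ₁ _ hw, map_mul]
      ring
    exact ⟨L, fun γ z hz => key γ z hz, hcross,
      fun γ₁ γ₂ h1 h2 => by rw [hcross γ₁ γ₂, h1, one_mul, add_comm]⟩
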